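/- Fix n ≥ 2, let G be a finite connected simple graph, ω : V(G) → Γ a placement function, and f : V(G) → V(C) a function satisfying conditions (C1) and (C2). Then there exists i* ∈ {0,…,n} such that for every vertex u of G with f(u) in the branch-star of C, ω(u) ≠ b(i*,t) for every t ∈ [0,1]. -/

import Mathlib

/-- Vertices of the infinite n-od graph `C`: a branch vertex, and nodes `C(ℓ,j)`
(intended for `1 ≤ ℓ ≤ n`, `j ≥ 1`). -/
inductive NOdVert : Type where
  | branch : NOdVert
  | node : ℕ → ℕ → NOdVert
deriving DecidableEq

/-- `cv ℓ j` denotes the vertex `C(ℓ,j)`, where `C(ℓ,0)` is the branch vertex. -/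
def cv (ℓ j : ℕ) : NOdVert := if j = 0 then NOdVert.branch else NOdVert.node ℓ j

/-- Adjacency in the infinite n-od `C`: `C(ℓ,j)` is adjacent to `C(ℓ,j+1)` for
`1 ≤ ℓ ≤ n` and `j ≥ 0` (the case `j = 0` gives branch–`C(ℓ,1)` edges). -/
def nodAdj (n : ℕ) (u v : NOdVert) : Prop :=
  ∃ ℓ j, 1 ≤ ℓ ∧ ℓ ≤ n ∧
    ((u = cv ℓ j ∧ v = cv ℓ (j + 1)) ∨ (v = cv ℓ j ∧ u = cv ℓ (j + 1)))

/-- The point `b(i,t) = ((1+t)cos(iπ/n), (1+t)sin(iπ/n))` in the plane. -/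
noncomputable def bpt (n i : ℕ) (t : ℝ) : ℝ × ℝ :=
  ((1 + t) * Real.cos (i * Real.pi / n), (1 + t) * Real.sin (i * Real.pi / n))

/-- The origin `o` of the plane. -/
def origin : ℝ × ℝ := (0, 0)

/-- A placement function: on each edge of `G`, one endpoint maps to `o` and the
other to some `b(i,t)` with `i ∈ {0,…,n}`, `t ∈ [0,1]`. -/
def IsPlacement {V : Type*} (n : ℕ) (G : SimpleGraph V) (ω : V → ℝ × ℝ) : Prop :=
  ∀ u v, G.Adj u v →
    (ω u = origin ∧ ∃ i ≤ n, ∃ t ∈ Set.Icc (0 : ℝ) 1, ω v = bpt n i t) ∨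
    (ω v = origin ∧ ∃ i ≤ n, ∃ t ∈ Set.Icc (0 : ℝ) 1, ω u = bpt n i t)

/-- Condition (C1). -/
def CondC1 {V : Type*} (n : ℕ) (ω : V → ℝ × ℝ) (f : V → NOdVert) : Prop :=
  ∀ u v, f u = f v →
    (ω u = origin ∧ ω v = origin) ∨
    ∃ i ≤ n, ∃ s ∈ Set.Icc (0 : ℝ) 1, ∃ t ∈ Set.Icc (0 : ℝ) 1,
      ω u = bpt n i s ∧ ω v = bpt n i t

/-- Condition (C2): `f` maps adjacent vertices of `G` to adjacent vertices of `C`. -/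
def CondC2 {V : Type*} (n : ℕ) (G : SimpleGraph V) (f : V → NOdVert) : Prop :=
  ∀ u v, G.Adj u v → nodAdj n (f u) (f v)

/-- `w 0, …, w k` is a wrapping pattern in `G` for the placement function `ω`. -/
def IsWrapping {V : Type*} (n : ℕ) (G : SimpleGraph V) (ω : V → ℝ × ℝ)
    (w : ℕ → V) (k : ℕ) : Prop :=
  0 < k ∧ 2 * (n + 1) ∣ k ∧
  (∀ p < k, G.Adj (w p) (w (p + 1))) ∧
  (∀ q, 2 * q ≤ k → ∃ t ∈ Set.Icc (0 : ℝ) 1, ω (w (2 * q)) = bpt n (q % (n + 1)) t) ∧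
  (∀ q, 2 * q + 1 ≤ k → ω (w (2 * q + 1)) = origin)

/-- The branch-star of `C`: the branch vertex together with `C(ℓ,1)`, `1 ≤ ℓ ≤ n`. -/
def branchStar (n : ℕ) : Set NOdVert :=
  {NOdVert.branch} ∪ {x | ∃ ℓ, 1 ≤ ℓ ∧ ℓ ≤ n ∧ x = NOdVert.node ℓ 1}

lemma bpt_ne_origin (n i : ℕ) {t : ℝ} (ht : t ∈ Set.Icc (0 : ℝ) 1) :
    bpt n i t ≠ origin := by
  intro h
  rw [bpt, origin, Prod.mk.injEq] at h
  obtain ⟨h1, h2⟩ := h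
  have h1t : (1 : ℝ) + t ≠ 0 := by nlinarith [ht.1]
  have hc : Real.cos (i * Real.pi / n) = 0 := by
    rcases mul_eq_zero.mp h1 with h | h
    · exact absurd h h1t
    · exact h
  have hs : Real.sin (i * Real.pi / n) = 0 := by
    rcases mul_eq_zero.mp h2 with h | h
    · exact absurd h h1t
    · exact h
  have := Real.sin_sq_add_cos_sq (i * Real.pi / n)
  rw [hc, hs] at this
  norm_num at this

lemma bpt_inj {n i j : ℕ} (hn : n ≠ 0) (hi : i ≤ n) (hj : j ≤ n) {s t : ℝ}
    (hs : s ∈ Set.Icc (0 : ℝ) 1) (ht : t ∈ Set.Icc (0 : ℝ) 1)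
    (h : bpt n i s = bpt n j t) : i = j := by
  rw [bpt, bpt, Prod.mk.injEq] at h
  obtain ⟨h1, h2⟩ := h
  set a := (i : ℝ) * Real.pi / n with ha
  set b := (j : ℝ) * Real.pi / n with hb
  have e1 := Real.sin_sq_add_cos_sq a
  have e2 := Real.sin_sq_add_cos_sq b
  have key : ((1 : ℝ) + s) ^ 2 = (1 + t) ^ 2 := by
    linear_combination ((1 + s) * Real.cos a + (1 + t) * Real.cos b) * h1 +
      ((1 + s) * Real.sin a + (1 + t) * Real.sin b) * h2 -
      (1 + s) ^ 2 * e1 + (1 + t) ^ 2 * e2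
  have hst : s = t := by nlinarith [hs.1, ht.1]
  subst hst
  have h1t : (1 : ℝ) + s ≠ 0 := by nlinarith [hs.1]
  have hcos : Real.cos a = Real.cos b := mul_left_cancel₀ h1t h1
  have hnpos : (0 : ℝ) < n := by positivity
  have hpi := Real.pi_pos
  have hamem : a ∈ Set.Icc 0 Real.pi := by
    constructor
    · positivity
    · rw [ha, div_le_iff₀ hnpos]
      have : (i : ℝ) ≤ n := by exact_mod_cast hi
      nlinarith
  have hbmem : b ∈ Set.Icc 0 Real.pi := by
    constructor
    · positivity
    · rw [hb, div_le_iff₀ hnpos]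
      have : (j : ℝ) ≤ n := by exact_mod_cast hj
      nlinarith
  have hab : a = b := Real.injOn_cos hamem hbmem hcos
  rw [ha, hb] at hab
  field_simp at hab
  exact_mod_cast hab

/-- An auxiliary encoding of branch-star vertices by indices. -/
def encBS : NOdVert → ℕ
  | .branch => 0
  | .node ℓ _ => ℓ

lemma encBS_le {n : ℕ} {x : NOdVert} (hx : x ∈ branchStar n) : encBS x ≤ n := by
  rcases hx with h | ⟨ℓ, h1, h2, h3⟩
  · simp only [Set.mem_singleton_iff] at h; subst h; simp [encBS]
  · subst h3; simpa [encBS] using h2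

lemma encBS_injOn {n : ℕ} {x y : NOdVert} (hx : x ∈ branchStar n)
    (hy : y ∈ branchStar n) (h : encBS x = encBS y) : x = y := by
  rcases hx with h1 | ⟨ℓ, hℓ1, hℓ2, h1⟩ <;>
    rcases hy with h2 | ⟨m, hm1, hm2, h2⟩
  · simp only [Set.mem_singleton_iff] at h1 h2; rw [h1, h2]
  · simp only [Set.mem_singleton_iff] at h1; subst h1; subst h2
    simp [encBS] at h; omega
  · simp only [Set.mem_singleton_iff] at h2; subst h2; subst h1
    simp [encBS] at h; omega
  · subst h1; subst h2; simp [encBS] at h; rw [h]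

theorem stmt6 {V : Type*} [Fintype V] (n : ℕ) (hn : 2 ≤ n) (G : SimpleGraph V)
    (hG : G.Connected) (ω : V → ℝ × ℝ) (hω : IsPlacement n G ω)
    (f : V → NOdVert) (h1 : CondC1 n ω f) (h2 : CondC2 n G f) :
    ∃ i ≤ n, ∀ u : V, f u ∈ branchStar n →
      ∀ t ∈ Set.Icc (0 : ℝ) 1, ω u ≠ bpt n i t := by
  have hn0 : n ≠ 0 := by omega
  by_contra hcon
  push_neg at hcon
  choose u hu t ht hωu using fun i : Fin (n + 1) => hcon i.val (Fin.is_le i)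
  -- distinct indices have distinct f-values among witnesses
  have key : ∀ i j : Fin (n + 1), f (u i) = f (u j) → i = j := by
    intro i j hfe
    rcases h1 _ _ hfe with ⟨ho, _⟩ | ⟨k, hk, s, hs, t', ht', e1, e2⟩
    · exact absurd ((hωu i).symm.trans ho) (bpt_ne_origin n i (ht i))
    · have hik : (i : ℕ) = k :=
        bpt_inj hn0 (Fin.is_le i) hk (ht i) hs ((hωu i).symm.trans e1)
      have hjk : (j : ℕ) = k :=
        bpt_inj hn0 (Fin.is_le j) hk (ht j) ht' ((hωu j).symm.trans e2)
      exact Fin.ext (hik.trans hjk.symm)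
  -- the encoding map is injective, hence surjective
  have hinj : Function.Injective
      (fun i : Fin (n + 1) => (⟨encBS (f (u i)), Nat.lt_succ_of_le (encBS_le (hu i))⟩ :
        Fin (n + 1))) := by
    intro i j hij
    exact key i j (encBS_injOn (hu i) (hu j) (congrArg Fin.val hij))
  have hsurj := Finite.injective_iff_surjective.mp hinj
  -- helper: from encoding value, recover f-value
  have hrec : ∀ (i : Fin (n + 1)) (ℓ : ℕ), 1 ≤ ℓ → encBS (f (u i)) = ℓ →
      f (u i) = NOdVert.node ℓ 1 := by
    intro i ℓ hℓ he
    rcases hu i with h' | ⟨m, hm1, hm2, h'⟩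
    · simp only [Set.mem_singleton_iff] at h'; rw [h'] at he; simp [encBS] at he; omega
    · rw [h'] at he ⊢; simp [encBS] at he; rw [he]
  by_cases hbr : ∀ v, f v = NOdVert.branch → ω v = origin
  · -- some witness has f-value branch, contradiction
    obtain ⟨i, hi⟩ := hsurj ⟨0, by omega⟩
    have he : encBS (f (u i)) = 0 := congrArg Fin.val hi
    have hfb : f (u i) = NOdVert.branch := by
      rcases hu i with h' | ⟨m, hm1, hm2, h'⟩
      · simpa using h'
      · rw [h'] at he; simp [encBS] at he; omega
    exact bpt_ne_origin n i (ht i) ((hωu i).symm.trans (hbr _ hfb))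
  · push_neg at hbr
    obtain ⟨w, hwb, hwo⟩ := hbr
    -- find a vertex distinct from w
    obtain ⟨a, haa⟩ := hsurj ⟨1, by omega⟩
    have hfa : f (u a) = NOdVert.node 1 1 :=
      hrec a 1 le_rfl (congrArg Fin.val haa)
    have hne : w ≠ u a := by
      intro h; rw [← h, hwb] at hfa; exact NOdVert.noConfusion hfa
    -- get a neighbor of w
    obtain ⟨p⟩ := hG.preconnected w (u a)
    obtain ⟨v, hadj⟩ : ∃ v, G.Adj w v := by
      cases p with
      | nil => exact absurd rfl hne
      | cons h' q => exact ⟨_, h'⟩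
    -- f v = node ℓ 1 for some 1 ≤ ℓ ≤ n
    obtain ⟨ℓ, j, hℓ1, hℓn, hcase⟩ := h2 w v hadj
    have hfv : f v = NOdVert.node ℓ 1 := by
      rcases hcase with ⟨e1, e2⟩ | ⟨e1, e2⟩
      · rw [hwb] at e1
        have hj0 : j = 0 := by
          by_contra hj; rw [cv, if_neg hj] at e1; exact NOdVert.noConfusion e1
        subst hj0; simpa [cv] using e2
      · rw [hwb] at e2
        rw [cv, if_neg (Nat.succ_ne_zero j)] at e2
        exact absurd e2 (NOdVert.noConfusion)
    -- placement on edge w-v forces ω v = origin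
    have hvo : ω v = origin := by
      rcases hω w v hadj with ⟨h', _⟩ | ⟨h', _⟩
      · exact absurd h' hwo
      · exact h'
    -- but witness for index ℓ has f-value node ℓ 1 and is on a ray
    obtain ⟨b, hbb⟩ := hsurj ⟨ℓ, by omega⟩
    have hfb : f (u b) = NOdVert.node ℓ 1 := hrec b ℓ hℓ1 (congrArg Fin.val hbb)
    have hfeq : f (u b) = f v := by rw [hfb, hfv]
    rcases h1 _ _ hfeq with ⟨ho, _⟩ | ⟨k, hk, s, hs, t', ht', e1, e2⟩
    · exact bpt_ne_origin n b (ht b) ((hωu b).symm.trans ho)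
    · exact bpt_ne_origin n k ht' (e2.symm.trans hvo)
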